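/- The dimension of the kernel of the graph Laplacian L = A A^T of a finite oriented graph equals the number of connected components of the underlying undirected graph. -/

import Mathlib

open Matrix

/-- The dimension of the kernel of the graph Laplacian `L = A * Aᵀ` of a
finite oriented graph equals the number of connected components of the underlying
undirected graph. -/
theorem laplacian_kernel_dim_eq_components
    {V E : Type*} [Fintype V] [Fintype E] [DecidableEq V]
    (tail head : E → V) (hth : ∀ e, tail e ≠ head e)
    (A : Matrix V E ℝ)
    (hA : ∀ v e, A v e = if tail e = v then 1 else if head e = v then -1 else 0)
    (L : Matrix V V ℝ) (hL : L = A * Aᵀ) :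
    Module.finrank ℝ (LinearMap.ker L.mulVecLin) =
      Nat.card (SimpleGraph.fromRel fun v w => ∃ e, tail e = v ∧ head e = w).ConnectedComponent := by
  classical
  set G := SimpleGraph.fromRel fun v w => ∃ e, tail e = v ∧ head e = w with hG
  -- compute (Aᵀ *ᵥ x) e
  have hAT : ∀ (x : V → ℝ) (e : E), (Aᵀ *ᵥ x) e = x (tail e) - x (head e) := by
    intro x e
    have : (Aᵀ *ᵥ x) e = ∑ v, A v e * x v := by
      simp [mulVec, dotProduct, transpose_apply]
    rw [this]
    have hsum : ∀ v, A v e * x v =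
        (if tail e = v then x v else 0) + (if head e = v then -x v else 0) := by
      intro v
      rw [hA]
      by_cases h1 : tail e = v
      · have h2 : ¬ head e = v := fun h => hth e (h1.trans h.symm)
        simp [h1, h2]
      · by_cases h2 : head e = v
        · simp [h1, h2]
        · simp [h1, h2]
    simp only [hsum, Finset.sum_add_distrib]
    rw [Finset.sum_ite_eq, Finset.sum_ite_eq]
    simp [sub_eq_add_neg]
  -- kernel characterization
  have hker : ∀ x : V → ℝ, L *ᵥ x = 0 ↔ ∀ e, x (tail e) = x (head e) := by
    intro x
    constructor
    · intro h e
      have h0 : x ⬝ᵥ (L *ᵥ x) = 0 := by rw [h]; simp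
      rw [hL, ← mulVec_mulVec, dotProduct_mulVec,
        show x ᵥ* A = Aᵀ *ᵥ x by rw [← transpose_transpose A, vecMul_transpose, transpose_transpose]] at h0
      have h0' : ∑ f, ((Aᵀ *ᵥ x) f) ^ 2 = 0 := by
        rw [← h0]; simp [dotProduct, sq]
      have hz : (Aᵀ *ᵥ x) e = 0 := by
        have := (Finset.sum_eq_zero_iff_of_nonneg (fun f _ => sq_nonneg _)).mp h0' e
          (Finset.mem_univ e)
        exact pow_eq_zero_iff two_ne_zero |>.mp this
      rw [hAT] at hz
      linarith
    · intro h
      rw [hL, ← mulVec_mulVec]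
      have : Aᵀ *ᵥ x = 0 := by
        ext e; rw [hAT]; simp [h e]
      rw [this, mulVec_zero]
  -- kernels agree
  have hkereq : LinearMap.ker L.mulVecLin = LinearMap.ker (Matrix.toLin' (G.lapMatrix ℝ)) := by
    ext x
    rw [LinearMap.mem_ker, LinearMap.mem_ker, mulVecLin_apply,
      Matrix.toLin'_apply, SimpleGraph.lapMatrix_mulVec_eq_zero_iff_forall_adj, hker]
    constructor
    · intro h i j hij
      rw [hG, SimpleGraph.fromRel_adj] at hij
      rcases hij.2 with ⟨e, he1, he2⟩ | ⟨e, he1, he2⟩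
      · rw [← he1, ← he2]; exact h e
      · rw [← he1, ← he2]; exact (h e).symm
    · intro h e
      refine h _ _ ?_
      rw [hG, SimpleGraph.fromRel_adj]
      exact ⟨hth e, Or.inl ⟨e, rfl, rfl⟩⟩
  rw [hkereq, ← SimpleGraph.card_connectedComponent_eq_finrank_ker_toLin'_lapMatrix, Nat.card_eq_fintype_card]
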